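/- Let n be even, t ≤ n/2, s ≥ 1, and let A_0, A_1, …, A_q be subsets of {1,…,n}, each of size at least s, such that the Frankl sets I_{A_0}, …, I_{A_q} cover all (n/2 − t)-element subsets of {1,…,n} (i.e., they form a proper F-coloring of K(n, n/2 − t, s)). Then the hypergraph H with vertex set V = A_0 ∪ ⋯ ∪ A_q and edge set E = {A_0, …, A_q} has discrepancy at least s: for every 2-coloring c : {1,…,n} → {±1} there exists an index i with |Σ_{x ∈ A_i} c(x)| ≥ s. -/

import Mathlib

lemma sum_pm_eq (c : Fin n → ℤ) (hc : ∀ x, c x = 1 ∨ c x = -1) (B : Finset (Fin n)) :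
    ∑ x ∈ B, c x = 2 * ((B.filter (fun x => c x = 1)).card : ℤ) - B.card := by
  classical
  rw [← Finset.sum_filter_add_sum_filter_not B (fun x => c x = 1)]
  rw [Finset.sum_congr rfl (fun x hx => (Finset.mem_filter.mp hx).2),
    Finset.sum_congr rfl (fun x hx => ((hc x).resolve_left (Finset.mem_filter.mp hx).2 : c x = -1))]
  simp only [Finset.sum_const, smul_eq_mul, mul_one, mul_neg_one]
  have := Finset.card_filter_add_card_filter_not (s := B) (p := fun x => c x = 1)
  push_cast [← this]
  ring

/-- If the Frankl sets `I_{A_0}, …, I_{A_q}` form a proper F-coloring of `K(n, n/2 - t, s)`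
(i.e. they cover all `(n/2 - t)`-element subsets of `{1,…,n}`), then the hypergraph with
edges `A_0, …, A_q` has discrepancy at least `s`: every `±1`-coloring `c` of `{1,…,n}`
admits an index `i` with `|Σ_{x ∈ A_i} c(x)| ≥ s`. -/
theorem franklCover_discrepancy (n t s q : ℕ) (hn : Even n) (ht : t ≤ n / 2) (hs : 1 ≤ s)
    (A : Fin (q + 1) → Finset (Fin n)) (hA : ∀ i, s ≤ (A i).card)
    (hcover : ∀ v : Finset (Fin n), v.card = n / 2 - t →
      ∃ i, (A i).card + s ≤ 2 * (v ∩ A i).card) :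
    ∀ c : Fin n → ℤ, (∀ x, c x = 1 ∨ c x = -1) →
      ∃ i, (s : ℤ) ≤ |∑ x ∈ A i, c x| := by
  classical
  intro c hc
  set P : Finset (Fin n) := Finset.univ.filter (fun x => c x = 1) with hP
  set N : Finset (Fin n) := Finset.univ.filter (fun x => ¬ c x = 1) with hN
  have hPN : P.card + N.card = n := by
    simpa using Finset.card_filter_add_card_filter_not (s := (Finset.univ : Finset (Fin n)))
      (p := fun x => c x = 1)
  have hkey : ∀ (i : Fin (q+1)), ∑ x ∈ A i, c x
      = 2 * (((A i).filter (fun x => c x = 1)).card : ℤ) - (A i).card :=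
    fun i => sum_pm_eq c hc (A i)
  have hcase : n / 2 - t ≤ P.card ∨ n / 2 - t ≤ N.card := by
    by_contra h
    push_neg at h
    have : P.card + N.card < n := by
      calc P.card + N.card < (n/2 - t) + (n/2 - t) := by omega
        _ ≤ n := by omega
    omega
  rcases hcase with h | h
  · obtain ⟨v, hvP, hvcard⟩ := Finset.exists_subset_card_eq (s := P) (n := n/2 - t) h
    obtain ⟨i, hi⟩ := hcover v hvcard
    refine ⟨i, ?_⟩
    have hsub : v ∩ A i ⊆ (A i).filter (fun x => c x = 1) := by
      intro x hx
      rw [Finset.mem_inter] at hx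
      have := hvP hx.1
      rw [hP, Finset.mem_filter] at this
      exact Finset.mem_filter.mpr ⟨hx.2, this.2⟩
    have hle : (A i).card + s ≤ 2 * ((A i).filter (fun x => c x = 1)).card :=
      le_trans hi (by have := Finset.card_le_card hsub; omega)
    rw [hkey i]
    rw [abs_of_nonneg (by push_cast; omega)]
    push_cast
    omega
  · obtain ⟨v, hvN, hvcard⟩ := Finset.exists_subset_card_eq (s := N) (n := n/2 - t) h
    obtain ⟨i, hi⟩ := hcover v hvcard
    refine ⟨i, ?_⟩
    have hdisj : Disjoint (v ∩ A i) ((A i).filter (fun x => c x = 1)) := by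
      rw [Finset.disjoint_left]
      intro x hx hx'
      have h1 := hvN (Finset.mem_inter.mp hx).1
      rw [hN, Finset.mem_filter] at h1
      exact h1.2 (Finset.mem_filter.mp hx').2
    have hun : (v ∩ A i).card + ((A i).filter (fun x => c x = 1)).card ≤ (A i).card := by
      rw [← Finset.card_union_of_disjoint hdisj]
      apply Finset.card_le_card
      intro x hx
      rcases Finset.mem_union.mp hx with hx | hx
      · exact (Finset.mem_inter.mp hx).2
      · exact (Finset.mem_filter.mp hx).1
    have hle : 2 * ((A i).filter (fun x => c x = 1)).card + s ≤ (A i).card := by omega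
    rw [hkey i]
    rw [abs_of_nonpos (by push_cast; omega)]
    push_cast
    omega
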